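/- Let E and V_n (n ∈ ℕ) be selective ultrafilters on ℕ, let V = E-∑_n V_n, and let B_V = {b ⊆ ℕ×ℕ : π₁(b) ∈ E and b(n) ∈ V_n for every n ∈ π₁(b)}, where π₁(b) = {n : b(n) ≠ ∅}. Then B_V is a base for V witnessing that V is basically generated, and B_V is closed under finite intersections: for all b₀, b₁ ∈ B_V, b₀ ∩ b₁ ∈ B_V. -/
import Mathlib


/-- The `U`-indexed sum of the ultrafilters `V n`: a set `X ⊆ ℕ × ℕ` belongs to the sum
iff `{n | X(n) ∈ V n} ∈ U`, where `X(n)` is the `n`-th vertical section of `X`. -/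
def sumUF (U : Ultrafilter ℕ) (V : ℕ → Ultrafilter ℕ) : Ultrafilter (ℕ × ℕ) :=
  U.bind fun n => (V n).map fun m => (n, m)

/-- `U` is selective: for every `f : ℕ → ℕ` there is `A ∈ U` on which `f` is
one-to-one or constant. -/
def IsSelective (U : Ultrafilter ℕ) : Prop :=
  ∀ f : ℕ → ℕ, ∃ A ∈ U, Set.InjOn f A ∨ ∃ c, ∀ a ∈ A, f a = c

/-- The `n`-th vertical section of `b ⊆ ℕ × ℕ`. -/
def sect (b : Set (ℕ × ℕ)) (n : ℕ) : Set ℕ := {m | (n, m) ∈ b}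

/-- Pointwise (product-topology) convergence of a sequence of subsets of `X`,
identifying `𝒫(X)` with `2^X`. -/
def ConvergesTo {X : Type*} (b : ℕ → Set X) (c : Set X) : Prop :=
  ∀ x : X, ∃ N : ℕ, ∀ n, N ≤ n → (x ∈ b n ↔ x ∈ c)

/-- `B` witnesses that the ultrafilter `U` is basically generated: `B` is a base for `U`
and every sequence from `B` converging (in `2^X`) to a member of `B` has an infinite
subsequence whose intersection is in `U`. -/
def BasicallyGeneratedBy {X : Type*} (U : Ultrafilter X) (B : Set (Set X)) : Prop :=
  (∀ b ∈ B, b ∈ U) ∧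
  (∀ a ∈ U, ∃ b ∈ B, b ⊆ a) ∧
  (∀ (b : ℕ → Set X) (c : Set X), (∀ n, b n ∈ B) → c ∈ B → ConvergesTo b c →
    ∃ M : Set ℕ, M.Infinite ∧ (⋂ n ∈ M, b n) ∈ U)

/-- `B_V = {b ⊆ ℕ×ℕ : π₁(b) ∈ E and b(n) ∈ V_n for every n ∈ π₁(b)}`,
where `π₁(b) = {n : b(n) ≠ ∅}`. -/
def BV (E : Ultrafilter ℕ) (Vn : ℕ → Ultrafilter ℕ) : Set (Set (ℕ × ℕ)) :=
  {b | {n | sect b n ≠ ∅} ∈ E ∧ ∀ n, sect b n ≠ ∅ → sect b n ∈ Vn n}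

lemma mem_sumUF {E : Ultrafilter ℕ} {V : ℕ → Ultrafilter ℕ} {X : Set (ℕ × ℕ)} :
    X ∈ sumUF E V ↔ {n | sect X n ∈ V n} ∈ E := by
  change X ∈ Filter.bind (↑E) (fun n => ↑((V n).map fun m => (n, m))) ↔ _
  rw [Filter.mem_bind']
  exact ⟨fun h => E.toFilter.mem_of_superset h (fun n hn => hn),
    fun h => E.toFilter.mem_of_superset h (fun n hn => hn)⟩

lemma mem_of_compl_finite {U : Ultrafilter ℕ} (h : ∀ S : Set ℕ, S.Finite → S ∉ U)
    {S : Set ℕ} (hS : Sᶜ.Finite) : S ∈ U := by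
  have h2 := h _ hS
  rwa [Ultrafilter.compl_mem_iff_notMem, not_not] at h2

lemma infinite_of_mem {U : Ultrafilter ℕ} (h : ∀ S : Set ℕ, S.Finite → S ∉ U)
    {S : Set ℕ} (hS : S ∈ U) : S.Infinite := by
  by_contra hfin
  rw [Set.not_infinite] at hfin
  exact h S hfin hS

/-- Core diagonalization lemma for selective ultrafilters. -/
lemma diag (U : Ultrafilter ℕ) (hU : IsSelective U) (R : ℕ → Set ℕ)
    (hR : ∀ x, R x ∈ U) (hdec : ∀ x y, x ≤ y → R y ⊆ R x) :
    ∃ Z ∈ U, Z ⊆ R 0 ∧ ∀ m ∈ Z, ∀ m' ∈ Z, m < m' → m' ∈ R m := by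
  classical
  by_cases hpure : ∃ S : Set ℕ, S.Finite ∧ S ∈ U
  · obtain ⟨S, hSf, hSU⟩ := hpure
    obtain ⟨a, -, rfl⟩ := Ultrafilter.eq_pure_of_finite_mem hSf hSU
    refine ⟨{a}, Ultrafilter.mem_pure.mpr rfl, ?_, ?_⟩
    · intro x hx
      rcases hx with rfl
      exact Ultrafilter.mem_pure.mp (hR 0)
    · intro m hm m' hm' hlt
      rcases hm with rfl; rcases hm' with rfl; omega
  push_neg at hpure
  have hfin : ∀ S : Set ℕ, S.Finite → S ∉ U := fun S hf => hpure S hf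
  set T : Set ℕ := {m | ∀ x, m ∈ R x} with hTdef
  by_cases hT : T ∈ U
  · refine ⟨T ∩ R 0, Filter.inter_mem hT (hR 0), Set.inter_subset_right, ?_⟩
    intro m hm m' hm' _
    exact hm'.1 m
  have hTc : Tᶜ ∈ U := Ultrafilter.compl_mem_iff_notMem.2 hT
  have hg : ∀ m' ∈ Tᶜ, ∃ x, m' ∉ R x := by
    intro m' hm'
    simpa [hTdef] using hm'
  set g : ℕ → ℕ := fun m' => if h : ∃ x, m' ∉ R x then Nat.find h else 0 with hgdef
  have hgspec : ∀ m' ∈ Tᶜ, ∀ x, (m' ∈ R x ↔ x < g m') := by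
    intro m' hm' x
    have h := hg m' hm'
    constructor
    · intro hmem
      by_contra hlt
      push_neg at hlt
      have h2 : m' ∉ R (g m') := by
        simp only [hgdef, dif_pos h]
        exact Nat.find_spec h
      exact h2 (hdec _ _ hlt hmem)
    · intro hlt
      have h2 : x < Nat.find h := by simpa [hgdef, dif_pos h] using hlt
      have := Nat.find_min h h2
      simpa using this
  obtain ⟨A₁, hA₁U, hA₁⟩ := hU g
  set A := A₁ ∩ Tᶜ with hAdef
  have hAU : A ∈ U := Filter.inter_mem hA₁U hTc
  have hginj : Set.InjOn g A := by
    rcases hA₁ with h | ⟨cst, hcst⟩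
    · exact h.mono Set.inter_subset_left
    · exfalso
      have h2 : A ∩ R cst ∈ U := Filter.inter_mem hAU (hR cst)
      obtain ⟨m', hm'A, hm'R⟩ := Filter.nonempty_of_mem (f := (U : Filter ℕ)) h2
      have hc : g m' = cst := hcst m' hm'A.1
      have := (hgspec m' hm'A.2 cst).1 hm'R
      omega
  have hfinpre : ∀ x : ℕ, {m' | m' ∈ A ∧ g m' ≤ x}.Finite := by
    intro x
    apply Set.Finite.of_finite_image (f := g)
    · apply (Set.finite_Iic x).subset
      rintro y ⟨m', ⟨-, hm'⟩, rfl⟩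
      exact hm'
    · exact hginj.mono (fun m hm => hm.1)
  set ν : ℕ → ℕ := fun i => Nat.rec 0 (fun _ prev => sSup {m' | m' ∈ A ∧ g m' ≤ prev} + prev + 1) i
    with hνdef
  have hνsucc : ∀ i, ν (i + 1) = sSup {m' | m' ∈ A ∧ g m' ≤ ν i} + ν i + 1 := fun i => rfl
  have hνmono : StrictMono ν := by
    apply strictMono_nat_of_lt_succ
    intro i
    rw [hνsucc]
    omega
  have hνgap : ∀ i, ∀ m' ∈ A, ν (i + 1) ≤ m' → ν i < g m' := by
    intro i m' hm' hge
    by_contra hle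
    push_neg at hle
    have hmem : m' ∈ {m' | m' ∈ A ∧ g m' ≤ ν i} := ⟨hm', hle⟩
    have := le_csSup (hfinpre (ν i)).bddAbove hmem
    rw [hνsucc] at hge
    omega
  set φ : ℕ → ℕ := fun m => Nat.findGreatest (fun i => ν i ≤ m) m with hφdef
  have hφ1 : ∀ m, ν (φ m) ≤ m := by
    intro m
    exact Nat.findGreatest_spec (P := fun i => ν i ≤ m) (Nat.zero_le m) (by exact Nat.zero_le m)
  have hφ2 : ∀ m, m < ν (φ m + 1) := by
    intro m
    by_contra h
    push_neg at h
    have hb : φ m + 1 ≤ m := le_trans (hνmono.le_apply) h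
    have := Nat.le_findGreatest (P := fun i => ν i ≤ m) hb h
    simp only [hφdef] at this ⊢
    omega
  have hφmono : Monotone φ := by
    intro m m' hmm'
    exact Nat.le_findGreatest (le_trans (Nat.findGreatest_le m) hmm') (le_trans (hφ1 m) hmm')
  obtain ⟨A₂, hA₂U, hA₂⟩ := hU φ
  set A' := A₂ ∩ A with hA'def
  have hA'U : A' ∈ U := Filter.inter_mem hA₂U hAU
  have hφinj : Set.InjOn φ A₂ := by
    rcases hA₂ with h | ⟨cst, hcst⟩
    · exact h
    · exfalso
      apply hfin A' _ hA'U
      apply (Set.finite_Iio (ν (cst + 1))).subset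
      intro m hm
      have h1 := hφ2 m
      rw [hcst m hm.1] at h1
      exact h1
  have hparity := Ultrafilter.mem_or_compl_mem U {m | Even (φ m)}
  have hkey : ∃ Z ∈ U, Z ⊆ A' ∧ ∀ m ∈ Z, ∀ m' ∈ Z, m < m' → φ m + 2 ≤ φ m' := by
    have main : ∀ (S : Set ℕ), S ∈ U → S ⊆ {m | Even (φ m)} ∨ S ⊆ {m | Even (φ m)}ᶜ →
        ∃ Z ∈ U, Z ⊆ A' ∧ ∀ m ∈ Z, ∀ m' ∈ Z, m < m' → φ m + 2 ≤ φ m' := by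
      intro S hSU hpar
      refine ⟨S ∩ A', Filter.inter_mem hSU hA'U, Set.inter_subset_right, ?_⟩
      intro m hm m' hm' hlt
      have h1 : φ m ≤ φ m' := hφmono hlt.le
      have h2 : φ m ≠ φ m' := fun heq => hlt.ne (hφinj hm.2.1 hm'.2.1 heq)
      rcases hpar with hp | hp
      · obtain ⟨a, ha⟩ := hp hm.1
        obtain ⟨b, hb⟩ := hp hm'.1
        omega
      · have ho1 : ¬ Even (φ m) := hp hm.1
        have ho2 : ¬ Even (φ m') := hp hm'.1
        rw [Nat.not_even_iff] at ho1 ho2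
        omega
    rcases hparity with hp | hp
    · exact main _ hp (Or.inl (fun x hx => hx))
    · exact main _ hp (Or.inr (fun x hx => hx))
  obtain ⟨Z, hZU, hZA', hZstep⟩ := hkey
  refine ⟨Z ∩ R 0, Filter.inter_mem hZU (hR 0), Set.inter_subset_right, ?_⟩
  intro m hm m' hm' hlt
  have hm'A : m' ∈ A := (hZA' hm'.1).2
  have hstep := hZstep m hm.1 m' hm'.1 hlt
  have h1 : ν (φ m + 1 + 1) ≤ ν (φ m') := hνmono.monotone (show φ m + 1 + 1 ≤ φ m' by omega)
  have h2 : ν (φ m') ≤ m' := hφ1 m'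
  have h3 : ν (φ m + 1) < g m' := hνgap (φ m + 1) m' hm'A (by omega)
  have h4 : m < ν (φ m + 1) := hφ2 m
  exact (hgspec m' hm'A.2 m).2 (by omega)

/-- Column lemma: diagonalization with good-section membership and function domination. -/
lemma col (W : Ultrafilter ℕ) (hW : IsSelective W) (hfin : ∀ S : Set ℕ, S.Finite → S ∉ W)
    (C : Set ℕ) (hC : C ∈ W) (sec : ℕ → Set ℕ) (G : ℕ → ℕ) :
    ∃ Z ∈ W, Z ⊆ C ∧ ∀ m ∈ Z, ∀ m' ∈ Z, m < m' →
      (∀ k ≤ m, sec k ∈ W → m' ∈ sec k) ∧ (∀ z ≤ m, G z < m') := by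
  classical
  set R : ℕ → Set ℕ := fun x =>
    C ∩ (⋂ k ∈ Finset.range (x + 1), (if sec k ∈ W then sec k else Set.univ)) ∩
      {m | ∀ z ≤ x, G z < m} with hRdef
  have hR : ∀ x, R x ∈ W := by
    intro x
    refine Filter.inter_mem (Filter.inter_mem hC ?_) ?_
    · rw [Filter.biInter_finset_mem]
      intro k _
      by_cases h : sec k ∈ W
      · rwa [if_pos h]
      · rw [if_neg h]; exact Filter.univ_mem
    · apply mem_of_compl_finite hfin
      apply (Set.finite_Iic ((Finset.range (x + 1)).sup G)).subset
      intro m hm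
      simp only [Set.mem_compl_iff, Set.mem_setOf_eq, not_forall] at hm
      obtain ⟨z, hz, hle⟩ := hm
      push_neg at hle
      have : G z ≤ (Finset.range (x + 1)).sup G :=
        Finset.le_sup (Finset.mem_range.mpr (by omega))
      simp only [Set.mem_Iic]
      omega
  have hdec : ∀ x y, x ≤ y → R y ⊆ R x := by
    intro x y hxy m hm
    obtain ⟨⟨h1, h2⟩, h3⟩ := hm
    refine ⟨⟨h1, ?_⟩, fun z hz => h3 z (by omega)⟩
    apply Set.mem_iInter₂.mpr
    intro k hk
    exact Set.mem_iInter₂.mp h2 k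
      (Finset.mem_range.mpr (by have := Finset.mem_range.mp hk; omega))
  obtain ⟨Z, hZW, hZ0, hZpair⟩ := diag W hW R hR hdec
  refine ⟨Z, hZW, fun m hm => (hZ0 hm).1.1, ?_⟩
  intro m hm m' hm' hlt
  have h := hZpair m hm m' hm' hlt
  constructor
  · intro k hk hkW
    have h2 := Set.mem_iInter₂.mp h.1.2 k (Finset.mem_range.mpr (by omega))
    rwa [if_pos hkW] at h2
  · exact h.2

lemma BV_inter {E : Ultrafilter ℕ} {Vn : ℕ → Ultrafilter ℕ} {b₀ b₁ : Set (ℕ × ℕ)}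
    (h₀ : b₀ ∈ BV E Vn) (h₁ : b₁ ∈ BV E Vn) : b₀ ∩ b₁ ∈ BV E Vn := by
  have hsect : ∀ n, sect (b₀ ∩ b₁) n = sect b₀ n ∩ sect b₁ n := fun n => rfl
  have hcond : ∀ n, sect (b₀ ∩ b₁) n ≠ ∅ → sect (b₀ ∩ b₁) n ∈ Vn n := by
    intro n hne
    rw [hsect] at hne ⊢
    refine Filter.inter_mem (h₀.2 n ?_) (h₁.2 n ?_)
    · intro h; apply hne; rw [h, Set.empty_inter]
    · intro h; apply hne; rw [h, Set.inter_empty]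
  refine ⟨?_, hcond⟩
  have h2 : {n | sect b₀ n ≠ ∅} ∩ {n | sect b₁ n ≠ ∅} ∈ E := Filter.inter_mem h₀.1 h₁.1
  refine E.toFilter.mem_of_superset h2 ?_
  rintro n ⟨hn₀, hn₁⟩
  have h3 : sect b₀ n ∩ sect b₁ n ∈ Vn n := Filter.inter_mem (h₀.2 n hn₀) (h₁.2 n hn₁)
  have h4 := Filter.nonempty_of_mem (f := ((Vn n : Ultrafilter ℕ) : Filter ℕ)) h3
  simp only [Set.mem_setOf_eq, hsect]
  exact h4.ne_empty

lemma BV_sub {E : Ultrafilter ℕ} {Vn : ℕ → Ultrafilter ℕ} {b : Set (ℕ × ℕ)}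
    (h : b ∈ BV E Vn) : b ∈ sumUF E Vn := by
  rw [mem_sumUF]
  exact E.toFilter.mem_of_superset h.1 (fun n hn => h.2 n hn)

lemma BV_base {E : Ultrafilter ℕ} {Vn : ℕ → Ultrafilter ℕ} {a : Set (ℕ × ℕ)}
    (h : a ∈ sumUF E Vn) : ∃ b ∈ BV E Vn, b ⊆ a := by
  rw [mem_sumUF] at h
  set A := {n | sect a n ∈ Vn n} with hAdef
  refine ⟨{p : ℕ × ℕ | p.1 ∈ A ∧ p.2 ∈ sect a p.1}, ⟨?_, ?_⟩, ?_⟩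
  · refine E.toFilter.mem_of_superset h ?_
    intro n hn
    obtain ⟨m, hm⟩ := Filter.nonempty_of_mem (f := ((Vn n : Ultrafilter ℕ) : Filter ℕ)) hn
    have : m ∈ sect {p : ℕ × ℕ | p.1 ∈ A ∧ p.2 ∈ sect a p.1} n := ⟨hn, hm⟩
    exact Set.nonempty_iff_ne_empty.mp ⟨m, this⟩
  · intro n hne
    obtain ⟨m, hmA, -⟩ := Set.nonempty_iff_ne_empty.mpr hne
    have : sect {p : ℕ × ℕ | p.1 ∈ A ∧ p.2 ∈ sect a p.1} n = sect a n := by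
      ext m'
      exact ⟨fun hp => hp.2, fun hp => ⟨hmA, hp⟩⟩
    rw [this]
    exact hmA
  · rintro ⟨n, m⟩ ⟨-, hm⟩
    exact hm

lemma key (E : Ultrafilter ℕ) (Vn : ℕ → Ultrafilter ℕ) (hE : IsSelective E)
    (hV : ∀ n, IsSelective (Vn n)) (b : ℕ → Set (ℕ × ℕ)) (c : Set (ℕ × ℕ))
    (hb : ∀ k, b k ∈ BV E Vn) (hc : c ∈ BV E Vn) (hconv : ConvergesTo b c) :
    ∃ M : Set ℕ, M.Infinite ∧ (⋂ k ∈ M, b k) ∈ sumUF E Vn := by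
  classical
  set b' : ℕ → Set (ℕ × ℕ) := fun k => b k ∩ c with hb'def
  have hb' : ∀ k, b' k ∈ BV E Vn := fun k => BV_inter (hb k) hc
  have hb'sub : ∀ k, b' k ⊆ b k := fun k => Set.inter_subset_left
  choose F hF using hconv
  have hF' : ∀ p ∈ c, ∀ k : ℕ, F p ≤ k → p ∈ b' k :=
    fun p hp k hk => ⟨(hF p k hk).mpr hp, hp⟩
  have hsecF : ∀ n, ∀ m ∈ sect c n, ∀ k : ℕ, F (n, m) ≤ k → m ∈ sect (b' k) n :=
    fun n m hm k hk => hF' (n, m) hm k hk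
  set P := {n | sect c n ≠ ∅} with hPdef
  have hP : P ∈ E := hc.1
  have hCn : ∀ n ∈ P, sect c n ∈ Vn n := fun n hn => hc.2 n hn
  set wit : ℕ → ℕ := fun n => if h : (sect c n).Nonempty then h.choose else 0 with hwitdef
  have hwit : ∀ n ∈ P, wit n ∈ sect c n := by
    intro n hn
    have h : (sect c n).Nonempty := Set.nonempty_iff_ne_empty.2 hn
    simp only [hwitdef, dif_pos h]
    exact h.choose_spec
  set h0 : ℕ → ℕ := fun n => F (n, wit n) with hh0def
  have hgoodtail : ∀ n ∈ P, ∀ k : ℕ, h0 n ≤ k → sect (b' k) n ∈ Vn n := by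
    intro n hn k hk
    have hmem : wit n ∈ sect (b' k) n := hsecF n (wit n) (hwit n hn) k hk
    exact (hb' k).2 n (Set.nonempty_iff_ne_empty.1 ⟨wit n, hmem⟩)
  set tame : ℕ → Prop := fun n => ∃ θ, {m | m ∈ sect c n ∧ F (n, m) ≤ θ} ∈ Vn n with htamedef
  have hwildfin : ∀ n, n ∈ P → ¬ tame n → ∀ S : Set ℕ, S.Finite → S ∉ Vn n := by
    intro n hn hw S hSf hSU
    obtain ⟨a, -, hpure⟩ := Ultrafilter.eq_pure_of_finite_mem hSf hSU
    apply hw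
    refine ⟨F (n, a), ?_⟩
    rw [hpure, Ultrafilter.mem_pure]
    have hac : a ∈ sect c n := by
      have h2 := hCn n hn
      rwa [hpure, Ultrafilter.mem_pure] at h2
    exact ⟨hac, le_refl _⟩
  have hcolumns : ∀ n, n ∈ P → ¬ tame n → ∃ Z ∈ Vn n, Z ⊆ sect c n ∧
      ∀ m ∈ Z, ∀ m' ∈ Z, m < m' →
        (∀ k ≤ m, sect (b' k) n ∈ Vn n → m' ∈ sect (b' k) n) ∧ (∀ z ≤ m, F (n, z) < m') :=
    fun n hn hw => col (Vn n) (hV n) (hwildfin n hn hw) _ (hCn n hn) _ _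
  choose! Z hZW hZsub hZpair using hcolumns
  set e : ℕ → ℕ → ℕ := fun n => Nat.nth (· ∈ Z n) with hedef
  have hZinf : ∀ n, n ∈ P → ¬ tame n → {j | j ∈ Z n}.Infinite := by
    intro n hn hw
    exact infinite_of_mem (hwildfin n hn hw) (hZW n hn hw)
  have hemem : ∀ n, n ∈ P → ¬ tame n → ∀ j, e n j ∈ Z n :=
    fun n hn hw j => Nat.nth_mem_of_infinite (hZinf n hn hw) j
  have hemono : ∀ n, n ∈ P → ¬ tame n → StrictMono (e n) :=
    fun n hn hw => Nat.nth_strictMono (hZinf n hn hw)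
  have hesurj : ∀ n, n ∈ P → ¬ tame n → ∀ m ∈ Z n, ∃ j, e n j = m := by
    intro n hn hw m hm
    obtain ⟨j, hj⟩ := Nat.subset_range_nth (p := (· ∈ Z n)) hm
    exact ⟨j, hj⟩
  have hFe : ∀ n, n ∈ P → ¬ tame n → ∀ j, F (n, e n (j + 1)) < e n (j + 2) := by
    intro n hn hw j
    exact (hZpair n hn hw (e n (j + 1)) (hemem n hn hw (j + 1)) (e n (j + 2))
      (hemem n hn hw (j + 2)) (hemono n hn hw (by omega))).2 (e n (j + 1)) le_rfl
  by_cases hEpure : ∃ S : Set ℕ, S.Finite ∧ S ∈ E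
  · -- principal E
    obtain ⟨S, hSf, hSE⟩ := hEpure
    obtain ⟨n₀, -, hEp⟩ := Ultrafilter.eq_pure_of_finite_mem hSf hSE
    have hmemE : ∀ T : Set ℕ, T ∈ E ↔ n₀ ∈ T := by
      intro T; rw [hEp, Ultrafilter.mem_pure]
    have hn₀P : n₀ ∈ P := (hmemE P).1 hP
    by_cases htame : tame n₀
    · obtain ⟨θ, hθ⟩ := htame
      refine ⟨Set.Ici (max θ (h0 n₀)), Set.Ici_infinite _, ?_⟩
      rw [mem_sumUF]
      rw [hmemE]
      have hsub : {m | m ∈ sect c n₀ ∧ F (n₀, m) ≤ θ} ⊆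
          sect (⋂ k ∈ Set.Ici (max θ (h0 n₀)), b k) n₀ := by
        intro m hm
        simp only [sect, Set.mem_iInter, Set.mem_setOf_eq]
        intro k hk
        have h2 : F (n₀, m) ≤ k := le_trans hm.2 (le_trans (le_max_left _ _) hk)
        exact hb'sub k (hF' (n₀, m) hm.1 k h2)
      exact (Vn n₀).toFilter.mem_of_superset hθ hsub
    · have hfinW := hwildfin n₀ hn₀P htame
      set good : Set ℕ := {k | sect (b' k) n₀ ∈ Vn n₀} with hgooddef
      have hgoodW : good ∈ Vn n₀ := by
        apply mem_of_compl_finite hfinW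
        apply (Set.finite_Iio (h0 n₀)).subset
        intro k hk
        simp only [Set.mem_compl_iff, hgooddef, Set.mem_setOf_eq] at hk
        simp only [Set.mem_Iio]
        by_contra h
        push_neg at h
        exact hk (hgoodtail n₀ hn₀P k h)
      set Z' := Z n₀ ∩ good with hZ'def
      have hZ'W : Z' ∈ Vn n₀ := Filter.inter_mem (hZW n₀ hn₀P htame) hgoodW
      have hZ'inf : {j | j ∈ Z'}.Infinite := infinite_of_mem hfinW hZ'W
      set e' : ℕ → ℕ := Nat.nth (· ∈ Z') with he'def
      have he'mem : ∀ j, e' j ∈ Z' := Nat.nth_mem_of_infinite hZ'inf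
      have he'inj : Function.Injective e' := Nat.nth_injective hZ'inf
      have hor : (e' '' {j | Even j}) ∈ Vn n₀ ∨ (e' '' {j | ¬ Even j}) ∈ Vn n₀ := by
        rw [← Ultrafilter.union_mem_iff]
        refine (Vn n₀).toFilter.mem_of_superset hZ'W ?_
        intro m hm
        obtain ⟨j, hj⟩ := Nat.subset_range_nth (p := (· ∈ Z')) hm
        by_cases hev : Even j
        · exact Or.inl ⟨j, hev, hj⟩
        · exact Or.inr ⟨j, hev, hj⟩
      have hkey : ∀ par : ℕ → Prop, (e' '' {j | par j}) ∈ Vn n₀ →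
          (∀ t : ℕ, ∃ j, ¬ par j ∧ ∀ t' , t' ≠ j → True) → True := fun _ _ _ => trivial
      -- produce target and M
      have main : ∀ Tg M : Set ℕ, Tg ∈ Vn n₀ → Tg ⊆ Z' → M.Infinite → M ⊆ Z' →
          (∀ m ∈ Tg, m ∉ M) → ∃ M' : Set ℕ, M'.Infinite ∧ (⋂ k ∈ M', b k) ∈ sumUF E Vn := by
        intro Tg M hTgW hTgsub hMinf hMsub hdisj
        refine ⟨M, hMinf, ?_⟩
        rw [mem_sumUF, hmemE]
        have hsub : Tg ⊆ sect (⋂ k ∈ M, b k) n₀ := by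
          intro m hm
          simp only [sect, Set.mem_iInter, Set.mem_setOf_eq]
          intro k hk
          have hmZ : m ∈ Z n₀ := (hTgsub hm).1
          have hkZ : k ∈ Z n₀ := (hMsub hk).1
          have hkg : k ∈ good := (hMsub hk).2
          have hne : m ≠ k := fun h => hdisj m hm (h ▸ hk)
          apply hb'sub k
          rcases lt_or_gt_of_ne hne with hlt | hgt
          · -- m < k : use F-domination
            have h2 := (hZpair n₀ hn₀P htame m hmZ k hkZ hlt).2 m le_rfl
            exact hsecF n₀ m (hZsub n₀ hn₀P htame hmZ) k h2.le
          · -- k < m : use good-section membership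
            exact (hZpair n₀ hn₀P htame k hkZ m hmZ hgt).1 k le_rfl hkg
        exact (Vn n₀).toFilter.mem_of_superset hTgW hsub
      rcases hor with h | h
      · refine main (e' '' {j | Even j}) (e' '' {j | ¬ Even j}) h ?_ ?_ ?_ ?_
        · rintro m ⟨j, -, rfl⟩; exact he'mem j
        · apply Set.infinite_of_injective_forall_mem (f := fun t : ℕ => e' (2 * t + 1))
          · intro a a' ha
            have := he'inj ha
            omega
          · intro t
            exact ⟨2 * t + 1, by simp [Nat.even_add_one, parity_simps], rfl⟩
        · rintro m ⟨j, -, rfl⟩; exact he'mem j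
        · rintro m ⟨j, hj, rfl⟩ ⟨j', hj', hjeq⟩
          have := he'inj hjeq
          exact hj' (this ▸ hj)
      · refine main (e' '' {j | ¬ Even j}) (e' '' {j | Even j}) h ?_ ?_ ?_ ?_
        · rintro m ⟨j, -, rfl⟩; exact he'mem j
        · apply Set.infinite_of_injective_forall_mem (f := fun t : ℕ => e' (2 * t))
          · intro a a' ha
            have := he'inj ha
            omega
          · intro t
            exact ⟨2 * t, by simp, rfl⟩
        · rintro m ⟨j, -, rfl⟩; exact he'mem j
        · rintro m ⟨j, hj, rfl⟩ ⟨j', hj', hjeq⟩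
          have := he'inj hjeq
          exact hj (this ▸ hj')
  · -- nonprincipal E
    push_neg at hEpure
    have hEfin : ∀ S : Set ℕ, S.Finite → S ∉ E := fun S hf => hEpure S hf
    set d : ℕ → Set ℕ := fun j => {n | n ∈ P → sect (b' j) n ∈ Vn n} with hddef
    have hd : ∀ j, d j ∈ E := by
      intro j
      have h1 : {n | sect (b' j) n ∈ Vn n} ∈ E :=
        E.toFilter.mem_of_superset (hb' j).1 (fun n hn => (hb' j).2 n hn)
      exact E.toFilter.mem_of_superset h1 (fun n hn _ => hn)
    set ζ : ℕ → ℕ → ℕ := fun n x => e n (x + 2) with hζdef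
    set GE : ℕ → ℕ := fun x =>
      max (h0 x) ((Finset.range (x + 1)).sup fun a => (Finset.range (x + 1)).sup (ζ a)) with hGEdef
    obtain ⟨X, hXE, hXP, hXpair⟩ := col E hE hEfin P hP d GE
    have hXinf : X.Infinite := infinite_of_mem hEfin hXE
    have hA : ∀ n ∈ X, ∀ k ∈ X, k ≠ n → sect (b' k) n ∈ Vn n := by
      intro n hn k hk hne
      rcases lt_or_gt_of_ne hne with hlt | hgt
      · exact ((hXpair k hk n hn hlt).1 k le_rfl (hd k)) (hXP hn)
      · have h2 := (hXpair n hn k hk hgt).2 n le_rfl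
        have h3 : h0 n < k := lt_of_le_of_lt (le_max_left _ _) h2
        exact hgoodtail n (hXP hn) k h3.le
    have hB : ∀ n ∈ X, ∀ k ∈ X, ∀ k' ∈ X, n ≤ k → k < k' → ζ n k < k' := by
      intro n hn k hk k' hk' hnk hkk'
      have h2 := (hXpair k hk k' hk' hkk').2 k le_rfl
      have h3a : ζ n k ≤ (Finset.range (k + 1)).sup (ζ n) :=
        Finset.le_sup (Finset.mem_range.mpr (by omega))
      have h3b : (Finset.range (k + 1)).sup (ζ n) ≤
          (Finset.range (k + 1)).sup (fun a => (Finset.range (k + 1)).sup (ζ a)) :=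
        Finset.le_sup (f := fun a => (Finset.range (k + 1)).sup (ζ a))
          (Finset.mem_range.mpr (by omega))
      have h3c : (Finset.range (k + 1)).sup (fun a => (Finset.range (k + 1)).sup (ζ a)) ≤ GE k :=
        le_max_right _ _
      omega
    set eX : ℕ → ℕ := Nat.nth (· ∈ X) with heXdef
    have heXmem : ∀ j, eX j ∈ X := Nat.nth_mem_of_infinite hXinf
    have heXinj : Function.Injective eX := Nat.nth_injective hXinf
    set Msets : ℕ → Set ℕ := fun i => eX '' {j | j % 3 = i} with hMdef
    have hMsub : ∀ i, ∀ m ∈ Msets i, m ∈ X := by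
      rintro i m ⟨j, -, rfl⟩; exact heXmem j
    have hMinf : ∀ i, i < 3 → (Msets i).Infinite := by
      intro i hi
      apply Set.Infinite.image
      · exact fun x _ y _ hxy => heXinj hxy
      · apply Set.infinite_of_injective_forall_mem (f := fun t : ℕ => 3 * t + i)
        · intro a a' ha
          have ha' : 3 * a + i = 3 * a' + i := ha
          omega
        · intro t
          show (3 * t + i) % 3 = i
          omega
    have hMdisj : ∀ i i', i ≠ i' → ∀ m, m ∈ Msets i → m ∈ Msets i' → False := by
      rintro i i' hne m ⟨j, hj, rfl⟩ ⟨j', hj', hjeq⟩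
      have h2 := heXinj hjeq
      simp only [Set.mem_setOf_eq] at hj hj'
      omega
    set hitIdx : ℕ → Set ℕ → Set ℕ :=
      fun n M => {j | ∃ k ∈ M, e n j < k ∧ k < F (n, e n (j + 1))} with hhitdef
    set badset : ℕ → Set ℕ → Set ℕ := fun n M => (fun j => e n (j + 1)) '' hitIdx n M with hbaddef
    set Bad : ℕ → Set ℕ := fun i => {n | n ∈ X ∧ ¬ tame n ∧ badset n (Msets i) ∈ Vn n} with hBaddef
    have hBadDisj : ∀ i i', i ≠ i' → ∀ n, n ∈ Bad i → n ∈ Bad i' → False := by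
      intro i i' hne n hni hni'
      obtain ⟨hnX, hw, hbi⟩ := hni
      obtain ⟨-, -, hbi'⟩ := hni'
      have hnP : n ∈ P := hXP hnX
      have hfinW := hwildfin n hnP hw
      have hint : badset n (Msets i) ∩ badset n (Msets i') ∈ Vn n := Filter.inter_mem hbi hbi'
      have hsub : badset n (Msets i) ∩ badset n (Msets i') ⊆
          (fun j => e n (j + 1)) '' {j | e n j < n} := by
        rintro m ⟨⟨j, hj, rfl⟩, ⟨j', hj', heq⟩⟩
        have hjj' : j' = j := by
          have h2 := Nat.nth_injective (hZinf n hnP hw) heq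
          omega
        rw [hjj'] at hj'
        obtain ⟨k, hkM, hk1, hk2⟩ := hj
        obtain ⟨k', hk'M, hk'1, hk'2⟩ := hj'
        have hkX : k ∈ X := hMsub i k hkM
        have hk'X : k' ∈ X := hMsub i' k' hk'M
        have hkk'ne : k ≠ k' := fun h => hMdisj i i' hne k hkM (h ▸ hk'M)
        have hFe2 := hFe n hnP hw j
        refine ⟨j, ?_, rfl⟩
        simp only [Set.mem_setOf_eq]
        by_contra hcon
        push_neg at hcon
        have hgen : ∀ a b2 : ℕ, a ∈ X → b2 ∈ X → a < b2 → e n j < a → b2 < e n (j + 2) → False := by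
          intro a b2 haX hb2X hab ha hb2
          have hna : n ≤ a := le_trans hcon ha.le
          have hζ := hB n hnX a haX b2 hb2X hna hab
          have h5 : e n (a + 2) < e n (j + 2) := lt_trans hζ hb2
          have h6 : a + 2 < j + 2 := (Nat.nth_lt_nth (hZinf n hnP hw)).1 h5
          have h7 : j ≤ e n j := (hemono n hnP hw).le_apply
          omega
        rcases lt_or_gt_of_ne hkk'ne with h | h
        · exact hgen k k' hkX hk'X h hk1 (lt_of_lt_of_le hk'2 hFe2.le)
        · exact hgen k' k hk'X hkX h hk'1 (lt_of_lt_of_le hk2 hFe2.le)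
      have hfin2 : ((fun j => e n (j + 1)) '' {j | e n j < n}).Finite := by
        apply Set.Finite.image
        apply (Set.finite_Iio n).subset
        intro j hj
        simp only [Set.mem_setOf_eq] at hj
        have h2 : j ≤ e n j := (hemono n hnP hw).le_apply
        simp only [Set.mem_Iio]
        omega
      exact hfinW _ (hfin2.subset hsub) hint
    have hBadE : ∀ i i', i ≠ i' → Bad i ∈ E → Bad i' ∈ E → False := by
      intro i i' hne h1 h2
      obtain ⟨n, hn1, hn2⟩ := Filter.nonempty_of_mem (f := (E : Filter ℕ)) (Filter.inter_mem h1 h2)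
      exact hBadDisj i i' hne n hn1 hn2
    have hME : ∀ i i', i ≠ i' → Msets i ∈ E → Msets i' ∈ E → False := by
      intro i i' hne h1 h2
      obtain ⟨m, hm1, hm2⟩ := Filter.nonempty_of_mem (f := (E : Filter ℕ)) (Filter.inter_mem h1 h2)
      exact hMdisj i i' hne m hm1 hm2
    have hex : ∃ i, i < 3 ∧ Bad i ∉ E ∧ Msets i ∉ E := by
      by_contra hcon
      push_neg at hcon
      have hor3 : ∀ i, i < 3 → Bad i ∈ E ∨ Msets i ∈ E := by
        intro i hi
        by_cases hBi : Bad i ∈ E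
        · exact Or.inl hBi
        · exact Or.inr (hcon i hi hBi)
      have h0c := hor3 0 (by omega)
      have h1c := hor3 1 (by omega)
      have h2c := hor3 2 (by omega)
      rcases h0c with b0 | m0 <;> rcases h1c with b1 | m1 <;> rcases h2c with b2 | m2
      · exact hBadE 0 1 (by omega) b0 b1
      · exact hBadE 0 1 (by omega) b0 b1
      · exact hBadE 0 2 (by omega) b0 b2
      · exact hME 1 2 (by omega) m1 m2
      · exact hBadE 1 2 (by omega) b1 b2
      · exact hME 0 2 (by omega) m0 m2
      · exact hME 0 1 (by omega) m0 m1
      · exact hME 0 1 (by omega) m0 m1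
    obtain ⟨i, hi3, hBadnot, hMnot⟩ := hex
    refine ⟨Msets i, hMinf i hi3, ?_⟩
    rw [mem_sumUF]
    have hHappy : X ∩ (Bad i)ᶜ ∩ (Msets i)ᶜ ∈ E :=
      Filter.inter_mem (Filter.inter_mem hXE (Ultrafilter.compl_mem_iff_notMem.2 hBadnot))
        (Ultrafilter.compl_mem_iff_notMem.2 hMnot)
    refine E.toFilter.mem_of_superset hHappy ?_
    rintro n ⟨⟨hnX, hnBad⟩, hnM⟩
    simp only [Set.mem_setOf_eq]
    have hnP : n ∈ P := hXP hnX
    have hAk : ∀ k ∈ Msets i, sect (b' k) n ∈ Vn n := fun k hk =>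
      hA n hnX k (hMsub i k hk) (fun h => hnM (h ▸ hk))
    have hgoal : ∀ T : Set ℕ, T ∈ Vn n → (∀ k ∈ Msets i, T ⊆ sect (b k) n) →
        sect (⋂ k ∈ Msets i, b k) n ∈ Vn n := by
      intro T hT hsub
      refine (Vn n).toFilter.mem_of_superset hT ?_
      intro m hm
      simp only [sect, Set.mem_iInter, Set.mem_setOf_eq]
      intro k hk
      exact hsub k hk hm
    by_cases htame : tame n
    · obtain ⟨θ, hθ⟩ := htame
      apply hgoal ({m | m ∈ sect c n ∧ F (n, m) ≤ θ} ∩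
        ⋂ k ∈ Finset.range θ, (if k ∈ Msets i then sect (b' k) n else Set.univ))
      · refine Filter.inter_mem hθ ?_
        rw [Filter.biInter_finset_mem]
        intro k _
        by_cases hkM : k ∈ Msets i
        · rw [if_pos hkM]; exact hAk k hkM
        · rw [if_neg hkM]; exact Filter.univ_mem
      · intro k hk m hm
        apply hb'sub k
        rcases lt_or_ge k θ with hlt | hle
        · have h2 := Set.mem_iInter₂.mp hm.2 k (Finset.mem_range.mpr hlt)
          rwa [if_pos hk] at h2
        · exact hF' (n, m) hm.1.1 k (le_trans hm.1.2 hle)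
    · set T := (fun j => e n (j + 1)) '' {j | j ∉ hitIdx n (Msets i)} with hTdef
      have hTW : T ∈ Vn n := by
        have hsplit : Z n ⊆ T ∪ ({e n 0} ∪ badset n (Msets i)) := by
          intro m hm
          obtain ⟨j, hj⟩ := hesurj n hnP htame m hm
          match j, hj with
          | 0, hj => exact Or.inr (Or.inl (hj ▸ rfl))
          | (j' + 1), hj =>
            by_cases hhit : j' ∈ hitIdx n (Msets i)
            · exact Or.inr (Or.inr ⟨j', hhit, hj⟩)
            · exact Or.inl ⟨j', hhit, hj⟩
        have hsmall : ({e n 0} ∪ badset n (Msets i)) ∉ Vn n := by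
          intro h
          rw [Ultrafilter.union_mem_iff] at h
          rcases h with h | h
          · exact hwildfin n hnP htame _ (Set.finite_singleton _) h
          · exact hnBad ⟨hnX, htame, h⟩
        rcases Ultrafilter.mem_or_compl_mem (Vn n) T with h | h
        · exact h
        · exfalso
          have h2 : Z n ∩ Tᶜ ∈ Vn n := Filter.inter_mem (hZW n hnP htame) h
          have h3 : Z n ∩ Tᶜ ⊆ {e n 0} ∪ badset n (Msets i) := by
            rintro m ⟨hmZ, hmT⟩
            rcases hsplit hmZ with h4 | h4
            · exact absurd h4 hmT
            · exact h4
          exact hsmall ((Vn n).toFilter.mem_of_superset h2 h3)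
      apply hgoal T hTW
      rintro k hk m ⟨j, hjnot, rfl⟩
      apply hb'sub k
      rcases le_or_gt k (e n j) with hle | hlt
      · exact (hZpair n hnP htame (e n j) (hemem n hnP htame j) (e n (j + 1))
          (hemem n hnP htame (j + 1)) (hemono n hnP htame (by omega))).1 k hle (hAk k hk)
      · have hnot : ¬ k < F (n, e n (j + 1)) := fun hcon => hjnot ⟨k, hk, hlt, hcon⟩
        push_neg at hnot
        exact hsecF n (e n (j + 1)) (hZsub n hnP htame (hemem n hnP htame (j + 1))) k hnot

theorem stmt16 (E : Ultrafilter ℕ) (Vn : ℕ → Ultrafilter ℕ)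
    (hE : IsSelective E) (hV : ∀ n, IsSelective (Vn n)) :
    BasicallyGeneratedBy (sumUF E Vn) (BV E Vn) ∧
    ∀ b₀ ∈ BV E Vn, ∀ b₁ ∈ BV E Vn, b₀ ∩ b₁ ∈ BV E Vn := by
  refine ⟨⟨?_, ?_, ?_⟩, fun b₀ h₀ b₁ h₁ => BV_inter h₀ h₁⟩
  · exact fun b hb => BV_sub hb
  · exact fun a ha => BV_base ha
  · exact fun b c hb hc hconv => key E Vn hE hV b c hb hc hconv
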